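/- For integers t, m with 2 ≤ t = m − 1 (i.e., S = Δ(m) \ {m+1} with m ≥ 3), the Apéry set Ap(S, m) equals {0, m+2, m+3, ..., 2m−1, 2m+1} and the minimal generating set of S equals {m, m+2, ..., 2m−1, 2m+1}; in particular e(S) = m. -/

import Mathlib

/-- A numerical semigroup: a subset of ℕ containing 0, closed under addition,
with finite complement. -/
noncomputable def IsNumericalSemigroup (S : Set ℕ) : Prop :=
  0 ∈ S ∧ (∀ a ∈ S, ∀ b ∈ S, a + b ∈ S) ∧ Sᶜ.Finite

/-- The half-line Δ(m) = {0} ∪ {x : m ≤ x}. -/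
noncomputable def Delta (m : ℕ) : Set ℕ := {0} ∪ {x | m ≤ x}

/-- Multiplicity: least nonzero element. -/
noncomputable def mult (S : Set ℕ) : ℕ := sInf {s ∈ S | s ≠ 0}

/-- Frobenius number: largest gap. -/
noncomputable def frob (S : Set ℕ) : ℕ := sSup Sᶜ

/-- Genus: number of gaps. -/
noncomputable def genus (S : Set ℕ) : ℕ := Sᶜ.ncard

/-- The image of S in ℤ. -/
noncomputable def ZS (S : Set ℕ) : Set ℤ := (fun n : ℕ => (n : ℤ)) '' S

/-- Pseudo-Frobenius numbers (as integers). -/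
noncomputable def PF (S : Set ℕ) : Set ℤ :=
  {x | x ∉ ZS S ∧ ∀ s ∈ S, s ≠ 0 → x + (s : ℤ) ∈ ZS S}

/-- Reduced pseudo-Frobenius set. -/
noncomputable def rPF (S : Set ℕ) : Set ℤ :=
  {x | x ∉ ZS S ∧ (frob S : ℤ) - (mult S : ℤ) + 1 ≤ x ∧ x ≤ (frob S : ℤ)}

/-- Type t(S). -/
noncomputable def typ (S : Set ℕ) : ℕ := (PF S).ncard

/-- Reduced type s(S). -/
noncomputable def redtyp (S : Set ℕ) : ℕ := (rPF S).ncard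

/-- Apéry set of n in S. -/
noncomputable def Ap (S : Set ℕ) (n : ℕ) : Set ℕ := {s ∈ S | ∀ u : ℕ, s = u + n → u ∉ S}

/-- Minimal system of generators. -/
noncomputable def msg (S : Set ℕ) : Set ℕ :=
  (S \ {0}) \ {x | ∃ a ∈ S \ {0}, ∃ b ∈ S \ {0}, x = a + b}

/-- Embedding dimension. -/
noncomputable def embdim (S : Set ℕ) : ℕ := (msg S).ncard

/-- Second smallest minimal generator. -/
noncomputable def secondGen (S : Set ℕ) : ℕ := sInf (msg S \ {mult S})

theorem stmt10 (m : ℕ) (hm : 3 ≤ m)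
    (S : Set ℕ) (hS : S = Delta m \ {m + 1}) :
    Ap S m = {0} ∪ {x | m + 2 ≤ x ∧ x ≤ 2 * m - 1} ∪ {2 * m + 1} ∧
    msg S = {m} ∪ {x | m + 2 ≤ x ∧ x ≤ 2 * m - 1} ∪ {2 * m + 1} ∧
    embdim S = m := by
  have hmem : ∀ x : ℕ, x ∈ S ↔ (x = 0 ∨ m ≤ x) ∧ x ≠ m + 1 := by
    intro x
    simp [hS, Delta, Set.mem_diff, Set.mem_union]
  have hAp : Ap S m = {0} ∪ {x | m + 2 ≤ x ∧ x ≤ 2 * m - 1} ∪ {2 * m + 1} := by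
    ext x
    simp only [Ap, Set.mem_setOf_eq, Set.mem_union, Set.mem_singleton_iff]
    constructor
    · rintro ⟨hx, h⟩
      rw [hmem] at hx
      by_contra hc
      push_neg at hc
      have hxm : m ≤ x := by omega
      have := h (x - m) (by omega)
      rw [hmem] at this
      push_neg at this
      omega
    · intro h
      constructor
      · rw [hmem]; omega
      · intro u hu
        rw [hmem]
        push_neg
        intro h2
        omega
  have hmsg : msg S = {m} ∪ {x | m + 2 ≤ x ∧ x ≤ 2 * m - 1} ∪ {2 * m + 1} := by
    ext x
    simp only [msg, Set.mem_diff, Set.mem_singleton_iff, Set.mem_setOf_eq,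
      Set.mem_union]
    constructor
    · rintro ⟨⟨hx, hx0⟩, hns⟩
      rw [hmem] at hx
      by_contra hc
      push_neg at hc
      exact hns ⟨m, ⟨by rw [hmem]; omega, by omega⟩, x - m,
        ⟨by rw [hmem]; omega, by omega⟩, by omega⟩
    · intro h
      refine ⟨⟨by rw [hmem]; omega, by omega⟩, ?_⟩
      rintro ⟨a, ⟨ha, ha0⟩, b, ⟨hb, hb0⟩, rfl⟩
      rw [hmem] at ha hb
      omega
  refine ⟨hAp, hmsg, ?_⟩
  have : msg S = ↑(insert m (insert (2 * m + 1) (Finset.Icc (m + 2) (2 * m - 1)))) := by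
    rw [hmsg]
    ext x
    simp [Set.mem_union, Set.mem_setOf_eq]
    omega
  rw [embdim, this, Set.ncard_coe_finset]
  rw [Finset.card_insert_of_notMem (by simp; omega),
    Finset.card_insert_of_notMem (by simp), Nat.card_Icc]
  omega
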